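/- Assume θ·(C - V_H) < 2·V_H - V_L - C and (2 + θ)·C/(C - V_L) < R0 < C/(C - V_H) (Case 2 bistability). Then both (1 - C/(R0(C - V_L)), 0) and (0, 1) are equilibria of the co-evolutionary vector field, and the Jacobian matrix of G at each of these two points has both of its eigenvalues strictly negative. -/

import Mathlib

open ContinuousLinearMap in
lemma hasFDerivAt_aux (C V_H V_L θ R0 : ℝ) (p : ℝ × ℝ) :
    HasFDerivAt (fun q : ℝ × ℝ =>
      (q.1 * (1 - q.1) * (C - (q.2 * V_H + (1 - q.2) * V_L)) - C / R0 * q.1,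
       q.2 * (1 - q.2) * (-q.1 + (1 + θ) * (1 - q.1))))
      (ContinuousLinearMap.prod
        ((((1 - 2*p.1) * (C - (p.2 * V_H + (1 - p.2) * V_L)) - C / R0) • fst ℝ ℝ ℝ)
          + ((p.1 * (1 - p.1) * (V_L - V_H)) • snd ℝ ℝ ℝ))
        (((p.2 * (1 - p.2) * (-(2 + θ))) • fst ℝ ℝ ℝ)
          + (((1 - 2*p.2) * (-p.1 + (1 + θ) * (1 - p.1))) • snd ℝ ℝ ℝ))) p := by
  have h1 : HasFDerivAt (fun q : ℝ×ℝ => q.1) (fst ℝ ℝ ℝ) p := hasFDerivAt_fst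
  have h2 : HasFDerivAt (fun q : ℝ×ℝ => q.2) (snd ℝ ℝ ℝ) p := hasFDerivAt_snd
  have hc : ∀ c : ℝ, HasFDerivAt (fun _ : ℝ×ℝ => c) (0 : ℝ×ℝ →L[ℝ] ℝ) p :=
    fun c => hasFDerivAt_const c p
  have hg1 := ((h1.mul ((hc 1).sub h1)).mul
      ((hc C).sub ((h2.mul (hc V_H)).add (((hc 1).sub h2).mul (hc V_L))))).sub
      ((hc (C/R0)).mul h1)
  have hg2 := (h2.mul ((hc 1).sub h2)).mul ((h1.neg).add ((hc (1+θ)).mul ((hc 1).sub h1)))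
  refine (HasFDerivAt.prodMk hg1 hg2).congr_fderiv ?_
  refine ContinuousLinearMap.ext fun v => ?_
  simp [Prod.ext_iff]
  constructor <;> ring

theorem stmt_14 (C V_H V_L θ R0 : ℝ)
    (hCH : C > V_H) (hHL : V_H > V_L) (hL : V_L > 0) (hθ : θ > 0) (hR0 : R0 > 1)
    (V : ℝ → ℝ) (hV : ∀ n, V n = n * V_H + (1 - n) * V_L)
    (f : ℝ → ℝ)
    (hf1 : ∀ x : ℝ, x < 1 - 1 / R0 → f x = 1 - 1 / (R0 * (1 - x)))
    (hf2 : ∀ x : ℝ, x ≥ 1 - 1 / R0 → f x = 0)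
    (G : ℝ × ℝ → ℝ × ℝ)
    (hG : ∀ p : ℝ × ℝ, G p = (p.1 * (1 - p.1) * (f p.1 * C - V p.2),
        p.2 * (1 - p.2) * (-p.1 + (1 + θ) * (1 - p.1))))
    (hcase : θ * (C - V_H) < 2 * V_H - V_L - C)
    (hRlo : (2 + θ) * C / (C - V_L) < R0) (hRhi : R0 < C / (C - V_H))
    (J : ℝ × ℝ → Matrix (Fin 2) (Fin 2) ℝ)
    (hJ : ∀ p : ℝ × ℝ, J p =
      !![(fderiv ℝ G p (1, 0)).1, (fderiv ℝ G p (0, 1)).1;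
         (fderiv ℝ G p (1, 0)).2, (fderiv ℝ G p (0, 1)).2]) :
    (G (1 - C / (R0 * (C - V_L)), 0) = (0, 0) ∧ G (0, 1) = (0, 0)) ∧
    (∀ p ∈ ({((1 : ℝ) - C / (R0 * (C - V_L)), (0 : ℝ)), (0, 1)} : Set (ℝ × ℝ)),
      DifferentiableAt ℝ G p ∧
      ∃ lam1 lam2 : ℝ, lam1 < 0 ∧ lam2 < 0 ∧
        ∀ t : ℝ, Matrix.det (t • (1 : Matrix (Fin 2) (Fin 2) ℝ) - J p) =
          (t - lam1) * (t - lam2)) := by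
  have hCL : (0:ℝ) < C - V_L := by linarith
  have hCHp : (0:ℝ) < C - V_H := by linarith
  have hC : (0:ℝ) < C := by linarith
  have hR0p : (0:ℝ) < R0 := by linarith
  have hden : (0:ℝ) < R0 * (C - V_L) := by positivity
  have hkey2 : (2+θ)*C < R0*(C-V_L) := by
    have := (div_lt_iff₀ hCL).mp hRlo; nlinarith
  have hkey : C < R0*(C-V_L) := by nlinarith
  have hkey3 : R0*(C-V_H) < C := by
    have := (lt_div_iff₀ hCHp).mp hRhi; linarith
  set xs : ℝ := 1 - C / (R0 * (C - V_L)) with hxs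
  have hxslt : xs < 1 - 1/R0 := by
    have h : 1/R0 < C / (R0*(C-V_L)) := by
      rw [div_lt_div_iff₀ hR0p hden]; nlinarith
    simp only [hxs]; linarith
  have h0lt : (0:ℝ) < 1 - 1/R0 := by
    have : 1/R0 < 1 := by rw [div_lt_one hR0p]; exact hR0
    linarith
  -- the smooth extension
  set Gs : ℝ × ℝ → ℝ × ℝ := fun q =>
      (q.1 * (1 - q.1) * (C - (q.2 * V_H + (1 - q.2) * V_L)) - C / R0 * q.1,
       q.2 * (1 - q.2) * (-q.1 + (1 + θ) * (1 - q.1))) with hGs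
  have hU : IsOpen {q : ℝ × ℝ | q.1 < 1 - 1/R0} :=
    isOpen_lt continuous_fst continuous_const
  have heq : ∀ q ∈ {q : ℝ × ℝ | q.1 < 1 - 1/R0}, G q = Gs q := by
    intro q hq
    have hq1 : q.1 < 1 - 1/R0 := hq
    have h1R : (0:ℝ) < 1/R0 := by positivity
    have hq2 : q.1 < 1 := by linarith
    have hne : (1:ℝ) - q.1 ≠ 0 := by intro h; linarith
    rw [hG, hf1 q.1 hq1, hV, hGs]
    refine Prod.ext ?_ rfl
    field_simp
    ring
  have heqev : ∀ p : ℝ × ℝ, p.1 < 1 - 1/R0 → G =ᶠ[nhds p] Gs := by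
    intro p hp
    exact Filter.eventuallyEq_of_mem (hU.mem_nhds hp) heq
  constructor
  · constructor
    · rw [hG, hf1 _ hxslt, hV]
      have h1xs : (1:ℝ) - xs = C / (R0 * (C - V_L)) := by simp [hxs]
      refine Prod.ext ?_ (by simp)
      show xs * (1 - xs) * ((1 - 1 / (R0 * (1 - xs))) * C - (0 * V_H + (1-0) * V_L)) = 0
      rw [h1xs]
      have : R0 * (C / (R0 * (C - V_L))) = C / (C - V_L) := by
        field_simp
      rw [this]
      have : (1 - 1 / (C / (C - V_L))) * C - (0 * V_H + (1-0) * V_L) = 0 := by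
        rw [one_div_div]; field_simp; ring
      rw [this, mul_zero]
    · rw [hG]; norm_num
  · intro p hp
    simp only [Set.mem_insert_iff, Set.mem_singleton_iff] at hp
    rcases hp with rfl | rfl
    · -- p = (xs, 0)
      have hmem : ((xs, (0:ℝ)) : ℝ × ℝ).1 < 1 - 1/R0 := hxslt
      have hFd := (hasFDerivAt_aux C V_H V_L θ R0 (xs, 0)).congr_of_eventuallyEq
        (heqev _ hmem)
      refine ⟨hFd.differentiableAt, ?_⟩
      have hf10 : fderiv ℝ G (xs, 0) (1, 0) =
          ((1 - 2*xs) * (C - V_L) - C / R0, 0) := by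
        rw [hFd.fderiv]; simp
      have hf01 : fderiv ℝ G (xs, 0) (0, 1) =
          (xs * (1 - xs) * (V_L - V_H), -xs + (1 + θ) * (1 - xs)) := by
        rw [hFd.fderiv]; simp
      have hJp : J (xs, 0) = !![(1 - 2*xs) * (C - V_L) - C / R0,
          xs * (1 - xs) * (V_L - V_H); 0, -xs + (1 + θ) * (1 - xs)] := by
        rw [hJ, hf10, hf01]
      refine ⟨(1 - 2*xs) * (C - V_L) - C / R0, -xs + (1 + θ) * (1 - xs), ?_, ?_, ?_⟩
      · have hval : (1 - 2*xs) * (C - V_L) - C / R0 = C / R0 - (C - V_L) := by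
          simp only [hxs]; field_simp; ring
        rw [hval]
        have : C / R0 < C - V_L := by rw [div_lt_iff₀ hR0p]; nlinarith
        linarith
      · have hval : -xs + (1 + θ) * (1 - xs) = (2+θ)*C / (R0*(C-V_L)) - 1 := by
          simp only [hxs]; ring
        rw [hval]
        have : (2+θ)*C / (R0*(C-V_L)) < 1 := (div_lt_one hden).mpr hkey2
        linarith
      · intro t
        rw [hJp]
        simp [Matrix.det_fin_two, Matrix.one_apply]
        try ring
    · -- p = (0, 1)
      have hmem : (((0:ℝ), (1:ℝ)) : ℝ × ℝ).1 < 1 - 1/R0 := h0lt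
      have hFd := (hasFDerivAt_aux C V_H V_L θ R0 (0, 1)).congr_of_eventuallyEq
        (heqev _ hmem)
      refine ⟨hFd.differentiableAt, ?_⟩
      have hf10 : fderiv ℝ G (0, 1) (1, 0) = ((C - V_H) - C / R0, 0) := by
        rw [hFd.fderiv]; simp
      have hf01 : fderiv ℝ G (0, 1) (0, 1) = (0, -(1+θ)) := by
        rw [hFd.fderiv]; simp; ring
      have hJp : J (0, 1) = !![(C - V_H) - C / R0, 0; 0, -(1+θ)] := by
        rw [hJ, hf10, hf01]
      refine ⟨(C - V_H) - C / R0, -(1+θ), ?_, by linarith, ?_⟩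
      · have : C - V_H < C / R0 := by rw [lt_div_iff₀ hR0p]; nlinarith
        linarith
      · intro t
        rw [hJp]
        simp [Matrix.det_fin_two, Matrix.one_apply]
        try ring
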